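/- arXiv:2604.17703 — 17 statements merged into one kernel-verified Lean document; each statement's English description precedes it below -/
import Mathlib

section
/- Conditional deontic explosion from 5(b),(e),(f): Let W be a finite set and ob : Set W → Set (Set W) satisfy axioms 5(b), 5(e), 5(f). Suppose A, B, C, D are pairwise disjoint nonempty subsets of W, A ∈ ob(A ∪ B), and C ∈ ob(C ∪ D). Then C ∈ ob(B ∪ C ∪ D). -/
theorem stmt0 {W : Type*} [Fintype W] (ob : Set W → Set (Set W))
    (h5b : ∀ X Y Z : Set W, Y ∩ X = Z ∩ X → (Y ∈ ob X ↔ Z ∈ ob X))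
    (h5e : ∀ X Y Z : Set W, Y ⊆ X → Z ∈ ob X → Y ∩ Z ≠ ∅ → Z ∈ ob Y)
    (h5f : ∀ X Y Z : Set W, X ∈ ob Y → X ∈ ob Z → X ∈ ob (Y ∪ Z))
    (A B C D : Set W)
    (hA : A ≠ ∅) (hB : B ≠ ∅) (hC : C ≠ ∅) (hD : D ≠ ∅)
    (hAB : A ∩ B = ∅) (hAC : A ∩ C = ∅) (hAD : A ∩ D = ∅)
    (hBC : B ∩ C = ∅) (hBD : B ∩ D = ∅) (hCD : C ∩ D = ∅)
    (hobA : A ∈ ob (A ∪ B)) (hobC : C ∈ ob (C ∪ D)) :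
    C ∈ ob (B ∪ C ∪ D) := by
  have h1 : (A ∪ C) ∈ ob (A ∪ B) := by
    refine (h5b (A ∪ B) (A ∪ C) A ?_).mpr ?_ <;>
    · first
      | (ext x; simp only [Set.mem_inter_iff, Set.mem_union]
         constructor
         · rintro ⟨hc | hc, hab⟩
           · exact ⟨hc, hab⟩
           · rcases hab with h | h
             · exact ⟨h, Or.inl h⟩
             · exact absurd (Set.mem_inter hc h) (by rw [Set.inter_comm] at hBC; simp [hBC])
         · rintro ⟨ha, hab⟩; exact ⟨Or.inl ha, hab⟩)
      | exact hobA
  have h2 : (A ∪ C) ∈ ob (C ∪ D) := by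
    refine (h5b (C ∪ D) (A ∪ C) C ?_).mpr hobC
    ext x; simp only [Set.mem_inter_iff, Set.mem_union]
    constructor
    · rintro ⟨ha | hc, hcd⟩
      · rcases hcd with h | h
        · exact ⟨h, Or.inl h⟩
        · exact absurd (Set.mem_inter ha h) (by simp [hAD])
      · exact ⟨hc, hcd⟩
    · rintro ⟨hc, hcd⟩; exact ⟨Or.inr hc, hcd⟩
  have h3 : (A ∪ C) ∈ ob ((A ∪ B) ∪ (C ∪ D)) := h5f _ _ _ h1 h2
  obtain ⟨c, hc⟩ := Set.nonempty_iff_ne_empty.mpr hC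
  have h4 : (A ∪ C) ∈ ob (B ∪ C ∪ D) := by
    refine h5e _ _ _ ?_ h3 ?_
    · intro x hx; rcases hx with (h | h) | h
      · exact Or.inl (Or.inr h)
      · exact Or.inr (Or.inl h)
      · exact Or.inr (Or.inr h)
    · intro h
      have : c ∈ (B ∪ C ∪ D) ∩ (A ∪ C) := ⟨Or.inl (Or.inr hc), Or.inr hc⟩
      rw [h] at this; exact this
  refine (h5b (B ∪ C ∪ D) (A ∪ C) C ?_).mp h4
  ext x; simp only [Set.mem_inter_iff, Set.mem_union]
  constructor
  · rintro ⟨ha | hc, hbcd⟩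
    · rcases hbcd with (h | h) | h
      · exact absurd (Set.mem_inter ha h) (by simp [hAB])
      · exact ⟨h, Or.inl (Or.inr h)⟩
      · exact absurd (Set.mem_inter ha h) (by simp [hAD])
    · exact ⟨hc, hbcd⟩
  · rintro ⟨hc, hbcd⟩; exact ⟨Or.inr hc, hbcd⟩
end

section
/- Conditional explosion: If ob satisfies axioms 5(a), 5(b), 5(d), 5(e), then for all subsets A, B, C of W, if A ∈ ob(C) and B ∩ Aᶜ ∩ C ≠ ∅ then B ∈ ob(Aᶜ ∩ C). -/
theorem stmt1 {W : Type*} [Fintype W] (ob : Set W → Set (Set W))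
    (h5a : ∀ X : Set W, ∅ ∉ ob X)
    (h5b : ∀ X Y Z : Set W, Y ∩ X = Z ∩ X → (Y ∈ ob X ↔ Z ∈ ob X))
    (h5d : ∀ X Y Z : Set W, Y ⊆ X → X ⊆ Z → Y ∈ ob X → (Z \ X) ∪ Y ∈ ob Z)
    (h5e : ∀ X Y Z : Set W, Y ⊆ X → Z ∈ ob X → Y ∩ Z ≠ ∅ → Z ∈ ob Y) :
    ∀ A B C : Set W, A ∈ ob C → B ∩ Aᶜ ∩ C ≠ ∅ → B ∈ ob (Aᶜ ∩ C) := by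
  intro A B C hA hne
  set V : Set W := Aᶜ ∩ C with hV
  set E : Set W := B ∩ Aᶜ ∩ C with hE
  -- A ∩ C ≠ ∅, else ∅ ∈ ob C
  have hAC : A ∩ C ≠ ∅ := by
    intro h
    exact h5a C ((h5b C A ∅ (by simpa using h)).mp hA)
  set X₀ : Set W := (V \ E) ∪ (A ∩ C) with hX₀
  have hX₀C : X₀ ⊆ C := by
    intro x hx
    rcases hx with hx | hx
    · exact hx.1.2
    · exact hx.2
  have hA₀ : A ∈ ob X₀ := by
    apply h5e C X₀ A hX₀C hA
    intro h
    apply hAC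
    ext x
    simp only [Set.mem_inter_iff, Set.mem_empty_iff_false, iff_false, not_and]
    intro hxA hxC
    have : x ∈ X₀ ∩ A := ⟨Or.inr ⟨hxA, hxC⟩, hxA⟩
    rw [h] at this
    exact this
  have hAC₀ : A ∩ C ∈ ob X₀ := by
    refine (h5b X₀ A (A ∩ C) ?_).mp hA₀
    ext x
    simp only [hX₀, hV, hE, Set.mem_inter_iff, Set.mem_union, Set.mem_diff,
      Set.mem_compl_iff]
    tauto
  set Z : Set W := V ∪ (A ∩ C) with hZ
  have hX₀Z : X₀ ⊆ Z := by
    intro x hx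
    rcases hx with hx | hx
    · exact Or.inl hx.1
    · exact Or.inr hx
  have hd := h5d X₀ (A ∩ C) Z Set.subset_union_right hX₀Z hAC₀
  have hset : (Z \ X₀) ∪ (A ∩ C) = E ∪ (A ∩ C) := by
    ext x
    simp only [hZ, hX₀, hV, hE, Set.mem_union, Set.mem_diff, Set.mem_inter_iff,
      Set.mem_compl_iff]
    tauto
  rw [hset] at hd
  have hVZ : V ⊆ Z := Set.subset_union_left
  have hEV : E ∈ ob V → B ∈ ob V := fun h => by
    refine (h5b V E B ?_).mp h
    ext x
    simp only [hE, hV, Set.mem_inter_iff, Set.mem_compl_iff]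
    tauto
  have hup : E ∪ (A ∩ C) ∈ ob V := by
    apply h5e Z V (E ∪ (A ∩ C)) hVZ hd
    intro h
    apply hne
    ext x
    simp only [Set.mem_empty_iff_false, iff_false]
    intro hx
    have hxE : x ∈ E := hx
    have : x ∈ V ∩ (E ∪ (A ∩ C)) := ⟨⟨hxE.1.2, hxE.2⟩, Or.inl hxE⟩
    rw [h] at this
    exact this
  refine (h5b V (E ∪ (A ∩ C)) B ?_).mp hup
  ext x
  simp only [hE, hV, Set.mem_inter_iff, Set.mem_union, Set.mem_compl_iff]
  tauto
end

section
/- Classification of models of CJ97: Let W be a finite type and ob : Set W → Set (Set W). Then ob satisfies axioms 5(a), 5(b), 5(c) (strong), 5(d), 5(e) if and only if one of the following holds: (i) ob X = ∅ for all X; (ii) ob X = {Y | X ≠ ∅ ∧ X ⊆ Y} for all X; or (iii) there exists a world a such that for all X, ob X = {Y | X ∩ Y ≠ ∅ ∧ X \ {a} ⊆ Y}. -/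
open Set

section Helpers

variable {W : Type*} [Fintype W] {ob : Set W → Set (Set W)}

private lemma ob_restrict
    (hb : ∀ X Y Z : Set W, Y ∩ X = Z ∩ X → (Y ∈ ob X ↔ Z ∈ ob X))
    {X Y : Set W} (hY : Y ∈ ob X) : Y ∩ X ∈ ob X :=
  (hb X Y (Y ∩ X) (by rw [inter_assoc, inter_self])).mp hY

private lemma ob_unrestrict
    (hb : ∀ X Y Z : Set W, Y ∩ X = Z ∩ X → (Y ∈ ob X ↔ Z ∈ ob X))
    {X Y : Set W} (hY : Y ∩ X ∈ ob X) : Y ∈ ob X :=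
  (hb X Y (Y ∩ X) (by rw [inter_assoc, inter_self])).mpr hY

private lemma ob_nonempty
    (ha : ∀ X : Set W, ∅ ∉ ob X)
    (hb : ∀ X Y Z : Set W, Y ∩ X = Z ∩ X → (Y ∈ ob X ↔ Z ∈ ob X))
    {X Y : Set W} (hY : Y ∈ ob X) : (Y ∩ X).Nonempty := by
  rw [nonempty_iff_ne_empty]
  intro h
  exact ha X ((hb X Y ∅ (by rw [h, empty_inter])).mp hY)

private lemma ob_self
    (ha : ∀ X : Set W, ∅ ∉ ob X)
    (hb : ∀ X Y Z : Set W, Y ∩ X = Z ∩ X → (Y ∈ ob X ↔ Z ∈ ob X))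
    (hd : ∀ X Y Z : Set W, Y ⊆ X → X ⊆ Z → Y ∈ ob X → (Z \ X) ∪ Y ∈ ob Z)
    (he : ∀ X Y Z : Set W, Y ⊆ X → Z ∈ ob X → Y ∩ Z ≠ ∅ → Z ∈ ob Y)
    {X : Set W} (h : (ob X).Nonempty) : X ∈ ob X := by
  obtain ⟨Y, hY⟩ := h
  have h1 : Y ∩ X ∈ ob X := ob_restrict hb hY
  have hne : (Y ∩ X) ∩ (Y ∩ X) ≠ ∅ := by
    rw [inter_self]
    exact nonempty_iff_ne_empty.mp (ob_nonempty ha hb hY)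
  have h2 : Y ∩ X ∈ ob (Y ∩ X) := he X (Y ∩ X) (Y ∩ X) inter_subset_right h1 hne
  have h3 := hd (Y ∩ X) (Y ∩ X) X (subset_refl _) inter_subset_right h2
  have heq : (X \ (Y ∩ X)) ∪ (Y ∩ X) = X := by
    ext w
    simp only [mem_union, mem_diff, mem_inter_iff]
    tauto
  rwa [heq] at h3

private lemma ob_up
    (ha : ∀ X : Set W, ∅ ∉ ob X)
    (hb : ∀ X Y Z : Set W, Y ∩ X = Z ∩ X → (Y ∈ ob X ↔ Z ∈ ob X))
    (hd : ∀ X Y Z : Set W, Y ⊆ X → X ⊆ Z → Y ∈ ob X → (Z \ X) ∪ Y ∈ ob Z)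
    (he : ∀ X Y Z : Set W, Y ⊆ X → Z ∈ ob X → Y ∩ Z ≠ ∅ → Z ∈ ob Y)
    {X M Z : Set W} (hM : M ∈ ob X) (hMX : M ⊆ X) (hMZ : M ⊆ Z) (hZX : Z ⊆ X) :
    Z ∈ ob X := by
  have hMne : M.Nonempty := by
    have := ob_nonempty ha hb hM
    rwa [inter_eq_left.mpr hMX] at this
  set Y : Set W := (X \ Z) ∪ M with hYdef
  have hMY : M ⊆ Y := subset_union_right
  have hYX : Y ⊆ X := union_subset diff_subset hMX
  have hYMne : Y ∩ M ≠ ∅ := by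
    rw [inter_eq_right.mpr hMY]
    exact nonempty_iff_ne_empty.mp hMne
  have hMobY : M ∈ ob Y := he X Y M hYX hM hYMne
  have h3 := hd Y M X hMY hYX hMobY
  have heq : (X \ Y) ∪ M = Z := by
    ext w
    have h1 := @hMZ w
    have h2 := @hZX w
    simp only [hYdef, mem_union, mem_diff, not_or, not_and, not_not]
    tauto
  rwa [heq] at h3

end Helpers

theorem stmt2 {W : Type*} [Fintype W] (ob : Set W → Set (Set W)) :
    ((∀ X : Set W, ∅ ∉ ob X) ∧
     (∀ X Y Z : Set W, Y ∩ X = Z ∩ X → (Y ∈ ob X ↔ Z ∈ ob X)) ∧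
     (∀ X Y Z : Set W, Y ∈ ob X → Z ∈ ob X → Y ∩ Z ∈ ob X) ∧
     (∀ X Y Z : Set W, Y ⊆ X → X ⊆ Z → Y ∈ ob X → (Z \ X) ∪ Y ∈ ob Z) ∧
     (∀ X Y Z : Set W, Y ⊆ X → Z ∈ ob X → Y ∩ Z ≠ ∅ → Z ∈ ob Y)) ↔
    ((∀ X : Set W, ob X = ∅) ∨
     (∀ X : Set W, ob X = {Y | X ≠ ∅ ∧ X ⊆ Y}) ∨
     (∃ a : W, ∀ X : Set W, ob X = {Y | X ∩ Y ≠ ∅ ∧ X \ {a} ⊆ Y})) := by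
  constructor
  · rintro ⟨ha, hb, hc, hd, he⟩
    by_cases h0 : ∀ X : Set W, ob X = ∅
    · exact Or.inl h0
    push_neg at h0
    obtain ⟨X₀, hX₀⟩ := h0
    have hX0ne : (ob X₀).Nonempty := hX₀
    -- ob univ is nonempty
    have huniv : (ob (univ : Set W)).Nonempty := by
      obtain ⟨Y, hY⟩ := hX0ne
      have h1 : Y ∩ X₀ ∈ ob X₀ := ob_restrict hb hY
      exact ⟨_, hd X₀ (Y ∩ X₀) univ inter_subset_right (subset_univ _) h1⟩
    -- the minimum B of ob univ
    obtain ⟨B, hBmem, hBmin⟩ :=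
      Set.Finite.exists_minimalFor id (ob (univ : Set W)) (Set.toFinite _) huniv
    have hBleast : ∀ Y ∈ ob (univ : Set W), B ⊆ Y := by
      intro Y hY
      have h1 : B ∩ Y ∈ ob univ := hc univ B Y hBmem hY
      have h2 : B = B ∩ Y := subset_antisymm (hBmin h1 inter_subset_left) inter_subset_left
      rw [h2]
      exact inter_subset_right
    have hBne : B.Nonempty := by
      have := ob_nonempty ha hb hBmem
      rwa [inter_univ] at this
    -- lifting: every obligation in context X contains B ∩ X
    have hlift : ∀ X Y : Set W, Y ∈ ob X → B ∩ X ⊆ Y ∩ X := by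
      intro X Y hY
      have h1 : Y ∩ X ∈ ob X := ob_restrict hb hY
      have h2 := hd X (Y ∩ X) univ inter_subset_right (subset_univ _) h1
      have h3 := hBleast _ h2
      rintro w ⟨hwB, hwX⟩
      rcases h3 hwB with h | h
      · exact absurd hwX h.2
      · exact ⟨h.1, hwX⟩
    -- every nonempty context has univ as an obligation
    have hobne : ∀ X : Set W, X ≠ ∅ → univ ∈ ob X := by
      intro X hX
      refine he univ X univ (subset_univ _) (ob_self ha hb hd he huniv) ?_
      rwa [inter_univ]
    have hob_empty : ob (∅ : Set W) = ∅ := by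
      ext Y
      simp only [mem_empty_iff_false, iff_false]
      intro hY
      exact ha ∅ ((hb ∅ Y ∅ (by simp)).mp hY)
    by_cases hBuniv : B = univ
    · -- case (ii)
      refine Or.inr (Or.inl ?_)
      intro X
      by_cases hX : X = ∅
      · subst hX
        rw [hob_empty]
        ext Y
        simp
      · ext Y
        simp only [mem_setOf_eq]
        constructor
        · intro hY
          refine ⟨hX, fun w hw => ?_⟩
          have : w ∈ B ∩ X := ⟨by rw [hBuniv]; trivial, hw⟩
          exact (hlift X Y hY this).1
        · rintro ⟨-, hXY⟩
          refine (hb X Y univ ?_).mpr (hobne X hX)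
          rw [univ_inter, inter_eq_right]
          exact hXY
    · -- case (iii)
      have hex : ∃ a, a ∉ B := by
        by_contra hcon
        push_neg at hcon
        exact hBuniv (eq_univ_of_forall hcon)
      obtain ⟨a, haB⟩ := hex
      have hBc : ∀ b, b ∉ B → b = a := by
        intro b hbB
        by_contra hba
        set X2 : Set W := B ∪ {a, b} with hX2def
        have hBX2 : B ∈ ob X2 := by
          refine he univ X2 B (subset_univ _) hBmem ?_
          rw [inter_eq_right.mpr subset_union_left]
          exact nonempty_iff_ne_empty.mp hBne
        have haX2 : ({a, b} : Set W) ⊆ X2 := subset_union_right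
        have hY1 : B ∪ {a} ∈ ob X2 := by
          refine ob_up ha hb hd he hBX2 subset_union_left subset_union_left ?_
          exact union_subset subset_union_left
            (singleton_subset_iff.mpr (haX2 (by simp)))
        have hY2 : B ∪ {b} ∈ ob X2 := by
          refine ob_up ha hb hd he hBX2 subset_union_left subset_union_left ?_
          exact union_subset subset_union_left
            (singleton_subset_iff.mpr (haX2 (by simp)))
        have hY1X : B ∪ {a} ∈ ob ({a, b} : Set W) := by
          refine he X2 {a, b} (B ∪ {a}) haX2 hY1 ?_
          intro hcon
          have : a ∈ ({a, b} : Set W) ∩ (B ∪ {a}) := ⟨by simp, by simp⟩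
          rw [hcon] at this
          exact this
        have hY2X : B ∪ {b} ∈ ob ({a, b} : Set W) := by
          refine he X2 {a, b} (B ∪ {b}) haX2 hY2 ?_
          intro hcon
          have : b ∈ ({a, b} : Set W) ∩ (B ∪ {b}) := ⟨by simp, by simp⟩
          rw [hcon] at this
          exact this
        have hcc := hc {a, b} _ _ hY1X hY2X
        obtain ⟨w, hw⟩ := ob_nonempty ha hb hcc
        simp only [mem_inter_iff, mem_union, mem_insert_iff, mem_singleton_iff] at hw
        obtain ⟨⟨hw1, hw2⟩, hw3⟩ := hw
        rcases hw3 with h3 | h3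
        · subst h3
          rcases hw2 with hh | hh
          · exact haB hh
          · exact hba hh.symm
        · subst h3
          rcases hw1 with hh | hh
          · exact hbB hh
          · exact hba hh
      have hBiff : ∀ w, w ∈ B ↔ w ≠ a := by
        intro w
        constructor
        · rintro hw rfl
          exact haB hw
        · intro hw
          by_contra hcon
          exact hw (hBc w hcon)
      refine Or.inr (Or.inr ⟨a, ?_⟩)
      intro X
      by_cases hX : X = ∅
      · subst hX
        rw [hob_empty]
        ext Y
        simp
      · ext Y
        simp only [mem_setOf_eq]
        constructor
        · intro hY
          constructor
          · rw [inter_comm]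
            exact nonempty_iff_ne_empty.mp (ob_nonempty ha hb hY)
          · rintro w ⟨hwX, hwa⟩
            have hwB : w ∈ B := (hBiff w).mpr hwa
            exact (hlift X Y hY ⟨hwB, hwX⟩).1
        · rintro ⟨hXY, hXaY⟩
          by_cases hXa : X ⊆ {a}
          · have haX : a ∈ X := by
              obtain ⟨x, hx⟩ := nonempty_iff_ne_empty.mpr hX
              have := hXa hx
              rwa [mem_singleton_iff.mp this] at hx
            have hXeq : X = {a} := subset_antisymm hXa (singleton_subset_iff.mpr haX)
            subst hXeq
            have haY : a ∈ Y := by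
              obtain ⟨w, hw1, hw2⟩ := nonempty_iff_ne_empty.mpr hXY
              rwa [mem_singleton_iff.mp hw1] at hw2
            have hself : ({a} : Set W) ∈ ob {a} :=
              ob_self ha hb hd he ⟨univ, hobne {a} (singleton_ne_empty a)⟩
            refine (hb {a} Y {a} ?_).mpr hself
            rw [inter_self, inter_eq_right]
            exact singleton_subset_iff.mpr haY
          · obtain ⟨b, hbX, hba⟩ := not_subset.mp hXa
            rw [mem_singleton_iff] at hba
            have hBX : (X ∩ B).Nonempty := ⟨b, hbX, (hBiff b).mpr hba⟩
            have hBobX : B ∈ ob X :=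
              he univ X B (subset_univ _) hBmem (nonempty_iff_ne_empty.mp hBX)
            have hBXmem : B ∩ X ∈ ob X := ob_restrict hb hBobX
            have hsub : B ∩ X ⊆ Y ∩ X := by
              rintro w ⟨hwB, hwX⟩
              exact ⟨hXaY ⟨hwX, (hBiff w).mp hwB⟩, hwX⟩
            have hYX : Y ∩ X ∈ ob X :=
              ob_up ha hb hd he hBXmem inter_subset_right hsub inter_subset_right
            exact ob_unrestrict hb hYX
  · -- backward direction
    rintro (h | h | ⟨a, h⟩)
    · refine ⟨?_, ?_, ?_, ?_, ?_⟩ <;> intro X <;> simp [h]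
    · refine ⟨?_, ?_, ?_, ?_, ?_⟩
      · intro X hX
        rw [h] at hX
        obtain ⟨hne, hsub⟩ := hX
        exact hne (subset_empty_iff.mp hsub)
      · intro X Y Z hYZ
        simp only [h, mem_setOf_eq]
        constructor
        · rintro ⟨hne, hXY⟩
          refine ⟨hne, fun w hw => ?_⟩
          have : w ∈ Y ∩ X := ⟨hXY hw, hw⟩
          rw [hYZ] at this
          exact this.1
        · rintro ⟨hne, hXZ⟩
          refine ⟨hne, fun w hw => ?_⟩
          have : w ∈ Z ∩ X := ⟨hXZ hw, hw⟩
          rw [← hYZ] at this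
          exact this.1
      · intro X Y Z hY hZ
        rw [h] at hY hZ ⊢
        exact ⟨hY.1, subset_inter hY.2 hZ.2⟩
      · intro X Y Z hYX hXZ hY
        rw [h] at hY ⊢
        obtain ⟨hne, hXY⟩ := hY
        constructor
        · intro hZ
          exact hne (subset_empty_iff.mp (hZ ▸ hXZ))
        · intro w hw
          by_cases hwX : w ∈ X
          · exact Or.inr (hXY hwX)
          · exact Or.inl ⟨hw, hwX⟩
      · intro X Y Z hYX hZ hYZ
        rw [h] at hZ ⊢
        obtain ⟨hne, hXZ⟩ := hZ
        constructor
        · intro hY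
          rw [hY, empty_inter] at hYZ
          exact hYZ rfl
        · exact fun w hw => hXZ (hYX hw)
    · refine ⟨?_, ?_, ?_, ?_, ?_⟩
      · intro X hX
        rw [h] at hX
        exact hX.1 (inter_empty X)
      · intro X Y Z hYZ
        have key : ∀ U V : Set W, U ∩ X = V ∩ X →
            (X ∩ U ≠ ∅ ∧ X \ {a} ⊆ U) → (X ∩ V ≠ ∅ ∧ X \ {a} ⊆ V) := by
          rintro U V hUV ⟨h1, h2⟩
          constructor
          · rw [inter_comm, ← hUV, inter_comm]
            exact h1
          · rintro w ⟨hwX, hwa⟩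
            have : w ∈ U ∩ X := ⟨h2 ⟨hwX, hwa⟩, hwX⟩
            rw [hUV] at this
            exact this.1
        simp only [h, mem_setOf_eq]
        exact ⟨key Y Z hYZ, key Z Y hYZ.symm⟩
      · intro X Y Z hY hZ
        rw [h] at hY hZ ⊢
        obtain ⟨hY1, hY2⟩ := hY
        obtain ⟨hZ1, hZ2⟩ := hZ
        refine ⟨?_, fun w hw => ⟨hY2 hw, hZ2 hw⟩⟩
        by_cases hXa : ∃ w ∈ X, w ≠ a
        · obtain ⟨w, hwX, hwa⟩ := hXa
          intro hcon
          have : w ∈ X ∩ (Y ∩ Z) :=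
            ⟨hwX, hY2 ⟨hwX, hwa⟩, hZ2 ⟨hwX, hwa⟩⟩
          rw [hcon] at this
          exact this
        · push_neg at hXa
          obtain ⟨u, huX, huY⟩ := nonempty_iff_ne_empty.mpr hY1
          obtain ⟨v, hvX, hvZ⟩ := nonempty_iff_ne_empty.mpr hZ1
          have hu : u = a := hXa u huX
          have hv : v = a := hXa v hvX
          intro hcon
          have : a ∈ X ∩ (Y ∩ Z) := ⟨hu ▸ huX, hu ▸ huY, hv ▸ hvZ⟩
          rw [hcon] at this
          exact this
      · intro X Y Z hYX hXZ hY
        rw [h] at hY ⊢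
        obtain ⟨h1, h2⟩ := hY
        constructor
        · obtain ⟨w, hwX, hwY⟩ := nonempty_iff_ne_empty.mpr h1
          intro hcon
          have : w ∈ Z ∩ ((Z \ X) ∪ Y) := ⟨hXZ hwX, Or.inr hwY⟩
          rw [hcon] at this
          exact this
        · rintro w ⟨hwZ, hwa⟩
          by_cases hwX : w ∈ X
          · exact Or.inr (h2 ⟨hwX, hwa⟩)
          · exact Or.inl ⟨hwZ, hwX⟩
      · intro X Y Z hYX hZ hYZ
        rw [h] at hZ ⊢
        obtain ⟨h1, h2⟩ := hZ
        exact ⟨hYZ, fun w hw => h2 ⟨hYX hw.1, hw.2⟩⟩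
end

section
/- Assume ob satisfies 5(d), 5(e), and 5(c⁻). If a₁ ≠ a₂, a₁ ∉ A, a₂ ∉ A, {a₁, a₂} ∈ ob {a₁, a₂}, and A ∈ ob X for every X with A ⊆ X, then {a₁} ∈ ob {a₁, a₂} and {a₂} ∈ ob {a₁, a₂}. -/
theorem stmt6 {W : Type*} [Fintype W] (ob : Set W → Set (Set W)) (A : Set W) (a₁ a₂ : W)
    (h5cm : ∀ X Y Z : Set W, Y ∈ ob X → Z ∈ ob X → X ∩ Y ∩ Z ≠ ∅ → Y ∩ Z ∈ ob X)
    (h5d : ∀ X Y Z : Set W, Y ⊆ X → X ⊆ Z → Y ∈ ob X → (Z \ X) ∪ Y ∈ ob Z)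
    (h5e : ∀ X Y Z : Set W, Y ⊆ X → Z ∈ ob X → Y ∩ Z ≠ ∅ → Z ∈ ob Y)
    (hne : a₁ ≠ a₂) (h1 : a₁ ∉ A) (h2 : a₂ ∉ A)
    (hpair : ({a₁, a₂} : Set W) ∈ ob {a₁, a₂})
    (hA : ∀ X : Set W, A ⊆ X → A ∈ ob X) :
    ({a₁} : Set W) ∈ ob {a₁, a₂} ∧ ({a₂} : Set W) ∈ ob {a₁, a₂} := by
  have key : ∀ b c : W, b ≠ c → b ∉ A → c ∉ A → ({b, c} : Set W) ∈ ob {b, c} →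
      ({c} : Set W) ∈ ob {b, c} := by
    intro b c hbc hb hc hp
    have hob : A ∈ ob (A ∪ {b}) := hA _ Set.subset_union_left
    have hd := h5d (A ∪ {b}) A (A ∪ {b, c}) Set.subset_union_left
      (Set.union_subset_union_right A (by simp)) hob
    have heq : (A ∪ {b, c}) \ (A ∪ {b}) ∪ A = A ∪ {c} := by
      ext x
      simp only [Set.mem_union, Set.mem_diff, Set.mem_singleton_iff, Set.mem_insert_iff]
      constructor
      · rintro (⟨(h | h | h), hn⟩ | h) <;> tauto
      · rintro (h | rfl)
        · tauto
        · exact Or.inl ⟨Or.inr (Or.inr rfl), by rintro (h | rfl) <;> [exact hc h; exact hbc rfl]⟩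
    rw [heq] at hd
    have he := h5e (A ∪ {b, c}) {b, c} (A ∪ {c}) (Set.subset_union_right) hd
      (by intro h; have : c ∈ ({b, c} : Set W) ∩ (A ∪ {c}) := by simp
          rw [h] at this; exact this)
    have hc' := h5cm {b, c} {b, c} (A ∪ {c}) hp he
      (by intro h; have : c ∈ ({b, c} : Set W) ∩ {b, c} ∩ (A ∪ {c}) := by simp
          rw [h] at this; exact this)
    have heq2 : ({b, c} : Set W) ∩ (A ∪ {c}) = {c} := by
      ext x
      simp only [Set.mem_inter_iff, Set.mem_insert_iff, Set.mem_singleton_iff, Set.mem_union]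
      constructor
      · rintro ⟨h | rfl, ha | h⟩ <;> first | exact h | tauto | exact absurd ha (by subst h; exact hb)
      · rintro rfl; tauto
    rwa [heq2] at hc'
  refine ⟨?_, key a₁ a₂ hne h1 h2 hpair⟩
  have hcomm : ({a₂, a₁} : Set W) = {a₁, a₂} := Set.pair_comm _ _
  have := key a₂ a₁ hne.symm h2 h1 (by rwa [hcomm])
  rwa [hcomm] at this
end

section
/- Assume ob satisfies axioms 5(a), 5(c) (strong), 5(d), 5(e). If a₁ ≠ a₂, a₁ ∉ A, a₂ ∉ A, and {a₁, a₂} ∈ ob {a₁, a₂}, then it is not the case that A ∈ ob X for every X with A ⊆ X. -/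
theorem stmt7 {W : Type*} [Fintype W] (ob : Set W → Set (Set W)) (A : Set W) (a₁ a₂ : W)
    (h5a : ∀ X : Set W, ∅ ∉ ob X)
    (h5c : ∀ X Y Z : Set W, Y ∈ ob X → Z ∈ ob X → Y ∩ Z ∈ ob X)
    (h5d : ∀ X Y Z : Set W, Y ⊆ X → X ⊆ Z → Y ∈ ob X → (Z \ X) ∪ Y ∈ ob Z)
    (h5e : ∀ X Y Z : Set W, Y ⊆ X → Z ∈ ob X → Y ∩ Z ≠ ∅ → Z ∈ ob Y)
    (hne : a₁ ≠ a₂) (h1 : a₁ ∉ A) (h2 : a₂ ∉ A)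
    (hpair : ({a₁, a₂} : Set W) ∈ ob {a₁, a₂}) :
    ¬ (∀ X : Set W, A ⊆ X → A ∈ ob X) := by
  intro h
  set Z : Set W := A ∪ {a₁, a₂} with hZ
  have hA1 : A ∈ ob (A ∪ {a₁}) := h _ Set.subset_union_left
  have hA2 : A ∈ ob (A ∪ {a₂}) := h _ Set.subset_union_left
  have hsub1 : A ∪ {a₁} ⊆ Z := by
    intro x hx; rcases hx with hx | hx
    · exact Or.inl hx
    · exact Or.inr (Or.inl hx)
  have hsub2 : A ∪ {a₂} ⊆ Z := by
    intro x hx; rcases hx with hx | hx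
    · exact Or.inl hx
    · exact Or.inr (Or.inr hx)
  have hd1 := h5d (A ∪ {a₁}) A Z Set.subset_union_left hsub1 hA1
  have hd2 := h5d (A ∪ {a₂}) A Z Set.subset_union_left hsub2 hA2
  have e1 : (Z \ (A ∪ {a₁})) ∪ A = {a₂} ∪ A := by
    ext x
    simp only [hZ, Set.mem_union, Set.mem_diff, Set.mem_singleton_iff, Set.mem_insert_iff]
    constructor
    · rintro (⟨(hx | hx | hx), hn⟩ | hx) <;> tauto
    · rintro (rfl | hx)
      · exact Or.inl ⟨Or.inr (Or.inr rfl), by rintro (h' | rfl) <;> [exact h2 h'; exact hne rfl]⟩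
      · exact Or.inr hx
  have e2 : (Z \ (A ∪ {a₂})) ∪ A = {a₁} ∪ A := by
    ext x
    simp only [hZ, Set.mem_union, Set.mem_diff, Set.mem_singleton_iff, Set.mem_insert_iff]
    constructor
    · rintro (⟨(hx | hx | hx), hn⟩ | hx) <;> tauto
    · rintro (rfl | hx)
      · exact Or.inl ⟨Or.inr (Or.inl rfl), by rintro (h' | rfl) <;> [exact h1 h'; exact hne rfl]⟩
      · exact Or.inr hx
  rw [e1] at hd1
  rw [e2] at hd2
  have hpsub : ({a₁, a₂} : Set W) ⊆ Z := Set.subset_union_right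
  have he1 : ({a₂} ∪ A : Set W) ∈ ob {a₁, a₂} := by
    refine h5e Z {a₁, a₂} _ hpsub hd1 ?_
    intro hemp
    have : a₂ ∈ (({a₁, a₂} : Set W) ∩ ({a₂} ∪ A)) := ⟨Or.inr rfl, Or.inl rfl⟩
    rw [hemp] at this; exact this
  have he2 : ({a₁} ∪ A : Set W) ∈ ob {a₁, a₂} := by
    refine h5e Z {a₁, a₂} _ hpsub hd2 ?_
    intro hemp
    have : a₁ ∈ (({a₁, a₂} : Set W) ∩ ({a₁} ∪ A)) := ⟨Or.inl rfl, Or.inl rfl⟩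
    rw [hemp] at this; exact this
  have hint := h5c _ _ _ (h5c _ _ _ he1 he2) hpair
  have : ({a₂} ∪ A) ∩ ({a₁} ∪ A) ∩ ({a₁, a₂} : Set W) = ∅ := by
    ext x
    simp only [Set.mem_inter_iff, Set.mem_union, Set.mem_singleton_iff, Set.mem_insert_iff,
      Set.mem_empty_iff_false, iff_false]
    rintro ⟨⟨h1' | h1', h2' | h2'⟩, h3' | h3'⟩ <;> subst_vars <;> tauto
  rw [this] at hint
  exact h5a _ hint
end

section
/- Assume ob satisfies all axioms 5(a), 5(b), 5(c) (strong), 5(d), 5(e). If a₁ ∉ A, a₂ ∉ A and a₁ ≠ a₂, then it is not the case that A ∈ ob X for every X with A ⊆ X. -/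
theorem stmt8 {W : Type*} [Fintype W] (ob : Set W → Set (Set W)) (A : Set W) (a₁ a₂ : W)
    (h5a : ∀ X : Set W, ∅ ∉ ob X)
    (h5b : ∀ X Y Z : Set W, Y ∩ X = Z ∩ X → (Y ∈ ob X ↔ Z ∈ ob X))
    (h5c : ∀ X Y Z : Set W, Y ∈ ob X → Z ∈ ob X → Y ∩ Z ∈ ob X)
    (h5d : ∀ X Y Z : Set W, Y ⊆ X → X ⊆ Z → Y ∈ ob X → (Z \ X) ∪ Y ∈ ob Z)
    (h5e : ∀ X Y Z : Set W, Y ⊆ X → Z ∈ ob X → Y ∩ Z ≠ ∅ → Z ∈ ob Y)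
    (h1 : a₁ ∉ A) (h2 : a₂ ∉ A) (hne : a₁ ≠ a₂) :
    ¬ (∀ X : Set W, A ⊆ X → A ∈ ob X) := by
  intro h
  set Z : Set W := A ∪ {a₁, a₂} with hZ
  have hob1 : A ∈ ob (A ∪ {a₁}) := h _ (Set.subset_union_left)
  have hob2 : A ∈ ob (A ∪ {a₂}) := h _ (Set.subset_union_left)
  have hd1 : (Z \ (A ∪ {a₁})) ∪ A ∈ ob Z := by
    apply h5d _ _ _ Set.subset_union_left _ hob1
    intro x hx
    rcases hx with hx | hx
    · exact Or.inl hx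
    · exact Or.inr (Or.inl hx)
  have hd2 : (Z \ (A ∪ {a₂})) ∪ A ∈ ob Z := by
    apply h5d _ _ _ Set.subset_union_left _ hob2
    intro x hx
    rcases hx with hx | hx
    · exact Or.inl hx
    · exact Or.inr (Or.inr hx)
  have e1 : (Z \ (A ∪ {a₁})) ∪ A = A ∪ {a₂} := by
    ext x
    simp only [hZ, Set.mem_union, Set.mem_diff, Set.mem_insert_iff, Set.mem_singleton_iff]
    constructor
    · rintro ((⟨h' | h', h''⟩) | h')
      · exact Or.inl h'
      · rcases h' with h' | h'
        · exact absurd (Or.inr h') h''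
        · exact Or.inr h'
      · exact Or.inl h'
    · rintro (h' | h')
      · exact Or.inr h'
      · subst h'
        left
        refine ⟨Or.inr (Or.inr rfl), ?_⟩
        rintro (h' | h')
        · exact h2 h'
        · exact hne h'.symm
  have e2 : (Z \ (A ∪ {a₂})) ∪ A = A ∪ {a₁} := by
    ext x
    simp only [hZ, Set.mem_union, Set.mem_diff, Set.mem_insert_iff, Set.mem_singleton_iff]
    constructor
    · rintro ((⟨h' | h', h''⟩) | h')
      · exact Or.inl h'
      · rcases h' with h' | h'
        · exact Or.inr h'
        · exact absurd (Or.inr h') h''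
      · exact Or.inl h'
    · rintro (h' | h')
      · exact Or.inr h'
      · subst h'
        left
        refine ⟨Or.inr (Or.inl rfl), ?_⟩
        rintro (h' | h')
        · exact h1 h'
        · exact hne h'
  rw [e1] at hd1; rw [e2] at hd2
  have hsub : ({a₁, a₂} : Set W) ⊆ Z := Set.subset_union_right
  have he1 : A ∪ {a₂} ∈ ob {a₁, a₂} := by
    apply h5e _ _ _ hsub hd1
    intro hcon
    have : a₂ ∈ (∅ : Set W) := by
      rw [← hcon]; exact ⟨Or.inr rfl, Or.inr rfl⟩
    exact this
  have he2 : A ∪ {a₁} ∈ ob {a₁, a₂} := by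
    apply h5e _ _ _ hsub hd2
    intro hcon
    have : a₁ ∈ (∅ : Set W) := by
      rw [← hcon]; exact ⟨Or.inl rfl, Or.inr rfl⟩
    exact this
  have hc : (A ∪ {a₂}) ∩ (A ∪ {a₁}) ∈ ob {a₁, a₂} := h5c _ _ _ he1 he2
  have hbad : (∅ : Set W) ∈ ob {a₁, a₂} := by
    rw [← h5b _ _ _ (?_ : ((A ∪ {a₂}) ∩ (A ∪ {a₁})) ∩ {a₁, a₂} = ∅ ∩ {a₁, a₂})]
    · exact hc
    · ext x
      simp only [Set.mem_inter_iff, Set.mem_union, Set.mem_insert_iff,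
        Set.mem_singleton_iff, Set.mem_empty_iff_false, Set.empty_inter]
      constructor
      · rintro ⟨⟨h' | h', h'' | h''⟩, h''' | h'''⟩ <;> subst_vars <;>
          first | exact h1 h' | exact h2 h' | exact h1 h'' | exact h2 h'' | exact hne rfl
      · exact False.elim
  exact h5a _ hbad
end

section
/- Assume ob satisfies axioms 5(b), 5(d), 5(e). If a is bad (i.e., there exists X with a ∈ X and X \ {a} ∈ ob X) and Y \ {a} ≠ ∅, then Y \ {a} ∈ ob Y. -/
theorem stmt9 {W : Type*} [Fintype W] (ob : Set W → Set (Set W)) (a : W)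
    (h5b : ∀ X Y Z : Set W, Y ∩ X = Z ∩ X → (Y ∈ ob X ↔ Z ∈ ob X))
    (h5d : ∀ X Y Z : Set W, Y ⊆ X → X ⊆ Z → Y ∈ ob X → (Z \ X) ∪ Y ∈ ob Z)
    (h5e : ∀ X Y Z : Set W, Y ⊆ X → Z ∈ ob X → Y ∩ Z ≠ ∅ → Z ∈ ob Y)
    (hbad : ∃ X : Set W, a ∈ X ∧ X \ {a} ∈ ob X)
    (Y : Set W) (hY : Y \ {a} ≠ ∅) :
    Y \ {a} ∈ ob Y := by
  obtain ⟨X, haX, hob⟩ := hbad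
  have h1 := h5d X (X \ {a}) Set.univ Set.diff_subset (Set.subset_univ _) hob
  have heq : (Set.univ \ X) ∪ (X \ {a}) = Set.univ \ {a} := by
    ext x; simp only [Set.mem_union, Set.mem_diff, Set.mem_univ, true_and,
      Set.mem_singleton_iff]
    constructor
    · rintro (h | ⟨_, h⟩) <;> [rintro rfl; exact h] ; exact h haX
    · intro h; by_cases hx : x ∈ X
      · exact Or.inr ⟨hx, h⟩
      · exact Or.inl hx
  rw [heq] at h1
  have h2 : Set.univ \ {a} ∈ ob Y := by
    apply h5e Set.univ Y _ (Set.subset_univ _) h1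
    rwa [show Y ∩ (Set.univ \ {a}) = Y \ {a} by ext x; simp [Set.mem_diff, and_comm]]
  exact (h5b Y (Set.univ \ {a}) (Y \ {a}) (by ext x; simp [Set.mem_diff, and_comm])).mp h2
end

section
/- Assume ob satisfies axioms 5(b), 5(d), 5(e). If X ∈ ob X for some set X and Y ≠ ∅, then Y ∈ ob Y. -/
theorem stmt10 {W : Type*} [Fintype W] (ob : Set W → Set (Set W))
    (h5b : ∀ X Y Z : Set W, Y ∩ X = Z ∩ X → (Y ∈ ob X ↔ Z ∈ ob X))
    (h5d : ∀ X Y Z : Set W, Y ⊆ X → X ⊆ Z → Y ∈ ob X → (Z \ X) ∪ Y ∈ ob Z)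
    (h5e : ∀ X Y Z : Set W, Y ⊆ X → Z ∈ ob X → Y ∩ Z ≠ ∅ → Z ∈ ob Y)
    (X Y : Set W) (hX : X ∈ ob X) (hY : Y ≠ ∅) :
    Y ∈ ob Y := by
  have huniv : (Set.univ : Set W) ∈ ob Set.univ := by
    have := h5d X X Set.univ (subset_refl _) (Set.subset_univ _) hX
    simpa using this
  have h1 : (Set.univ : Set W) ∈ ob Y := by
    apply h5e Set.univ Y Set.univ (Set.subset_univ _) huniv
    simpa using hY
  exact (h5b Y Set.univ Y (by simp)).mp h1
end

section
/- Assume ob satisfies axioms 5(b), 5(d), 5(e). If X \ {a} ≠ ∅ and X \ {a} ∈ ob X, then X ∈ ob X. -/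
theorem stmt11 {W : Type*} [Fintype W] (ob : Set W → Set (Set W)) (a : W) (X : Set W)
    (h5b : ∀ X Y Z : Set W, Y ∩ X = Z ∩ X → (Y ∈ ob X ↔ Z ∈ ob X))
    (h5d : ∀ X Y Z : Set W, Y ⊆ X → X ⊆ Z → Y ∈ ob X → (Z \ X) ∪ Y ∈ ob Z)
    (h5e : ∀ X Y Z : Set W, Y ⊆ X → Z ∈ ob X → Y ∩ Z ≠ ∅ → Z ∈ ob Y)
    (hne : X \ {a} ≠ ∅) (hob : X \ {a} ∈ ob X) :
    X ∈ ob X := by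
  have h1 : X \ {a} ∈ ob (X \ {a}) := by
    apply h5e X (X \ {a}) (X \ {a}) (Set.diff_subset) hob
    simpa [Set.inter_self] using hne
  have h2 := h5d (X \ {a}) (X \ {a}) X (subset_refl _) Set.diff_subset h1
  have heq : (X \ (X \ {a})) ∪ (X \ {a}) = X := by
    ext x; by_cases hx : x = a <;> simp [hx]
  rwa [heq] at h2
end

section
/- Assume ob satisfies axioms 5(a), 5(d), 5(e). If Set.univ \ {a} ∈ ob Set.univ, then Set.univ ∈ ob Set.univ. -/
theorem stmt12 {W : Type*} [Fintype W] (ob : Set W → Set (Set W)) (a : W)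
    (h5a : ∀ X : Set W, ∅ ∉ ob X)
    (h5d : ∀ X Y Z : Set W, Y ⊆ X → X ⊆ Z → Y ∈ ob X → (Z \ X) ∪ Y ∈ ob Z)
    (h5e : ∀ X Y Z : Set W, Y ⊆ X → Z ∈ ob X → Y ∩ Z ≠ ∅ → Z ∈ ob Y)
    (h : Set.univ \ {a} ∈ ob Set.univ) :
    (Set.univ : Set W) ∈ ob Set.univ := by
  have hne : (Set.univ \ {a} : Set W) ≠ ∅ := by
    intro he; rw [he] at h; exact h5a _ h
  have h1 : (Set.univ \ {a} : Set W) ∈ ob (Set.univ \ {a}) := by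
    apply h5e Set.univ _ _ (Set.subset_univ _) h
    rwa [Set.inter_self]
  have h2 := h5d (Set.univ \ {a}) (Set.univ \ {a}) Set.univ le_rfl (Set.subset_univ _) h1
  have : (Set.univ \ (Set.univ \ {a}) ∪ (Set.univ \ {a}) : Set W) = Set.univ := by
    ext x; simp [Classical.em]
  rwa [this] at h2
end

section
/- Assume ob satisfies axioms 5(a), 5(b), 5(d), 5(e). If a is bad (∃ X, a ∈ X ∧ X \ {a} ∈ ob X), then {a} ∈ ob {a}. -/
theorem stmt13 {W : Type*} [Fintype W] (ob : Set W → Set (Set W)) (a : W)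
    (h5a : ∀ X : Set W, ∅ ∉ ob X)
    (h5b : ∀ X Y Z : Set W, Y ∩ X = Z ∩ X → (Y ∈ ob X ↔ Z ∈ ob X))
    (h5d : ∀ X Y Z : Set W, Y ⊆ X → X ⊆ Z → Y ∈ ob X → (Z \ X) ∪ Y ∈ ob Z)
    (h5e : ∀ X Y Z : Set W, Y ⊆ X → Z ∈ ob X → Y ∩ Z ≠ ∅ → Z ∈ ob Y)
    (hbad : ∃ X : Set W, a ∈ X ∧ X \ {a} ∈ ob X) :
    ({a} : Set W) ∈ ob {a} := by
  obtain ⟨X, haX, hob⟩ := hbad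
  have hne : (X \ {a}) ≠ ∅ := by
    intro h
    exact h5a X (h ▸ hob)
  have h1 : X \ {a} ∈ ob (X \ {a}) := by
    apply h5e X (X \ {a}) (X \ {a}) (Set.diff_subset) hob
    rwa [Set.inter_self]
  have h2 : (Set.univ \ (X \ {a})) ∪ (X \ {a}) ∈ ob (Set.univ : Set W) :=
    h5d (X \ {a}) (X \ {a}) Set.univ (le_refl _) (Set.subset_univ _) h1
  have h3 : (Set.univ : Set W) ∈ ob (Set.univ : Set W) := by
    rwa [Set.diff_union_self, Set.univ_union] at h2
  have h4 : (Set.univ : Set W) ∈ ob ({a} : Set W) := by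
    apply h5e Set.univ {a} Set.univ (Set.subset_univ _) h3
    simp [Set.inter_univ]
  exact (h5b {a} Set.univ {a} (by simp)).mp h4
end

section
/- Global-to-local principle: Assume ob satisfies axioms 5(a), 5(d), 5(e). Suppose that for every set A, if A ∈ ob X for all X ⊇ A, then (Set.univ \ A) has at most one element. Then for all B ⊆ C with B ∈ ob C, the set C \ B has at most one element. -/
theorem stmt14 {W : Type*} [Fintype W] (ob : Set W → Set (Set W))
    (h5a : ∀ X : Set W, ∅ ∉ ob X)
    (h5d : ∀ X Y Z : Set W, Y ⊆ X → X ⊆ Z → Y ∈ ob X → (Z \ X) ∪ Y ∈ ob Z)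
    (h5e : ∀ X Y Z : Set W, Y ⊆ X → Z ∈ ob X → Y ∩ Z ≠ ∅ → Z ∈ ob Y)
    (hglobal : ∀ A : Set W, (∀ X : Set W, A ⊆ X → A ∈ ob X) → (Set.univ \ A).Subsingleton) :
    ∀ B C : Set W, B ⊆ C → B ∈ ob C → (C \ B).Subsingleton := by
  intro B C hBC hob
  set A : Set W := (Set.univ \ C) ∪ B with hA
  have hAuniv : A ∈ ob Set.univ := h5d C B Set.univ hBC (Set.subset_univ C) hob
  have hAne : A ≠ ∅ := by
    intro h
    exact h5a Set.univ (h ▸ hAuniv)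
  have hall : ∀ X : Set W, A ⊆ X → A ∈ ob X := by
    intro X hAX
    apply h5e Set.univ X A (Set.subset_univ X) hAuniv
    rw [Set.inter_eq_self_of_subset_right hAX]
    exact hAne
  have hsub : C \ B ⊆ Set.univ \ A := by
    intro x hx
    refine ⟨trivial, ?_⟩
    rintro (⟨_, hnc⟩ | hb)
    · exact hnc hx.1
    · exact hx.2 hb
  exact (hglobal A hall).anti hsub
end

section
/- Assume ob satisfies all axioms 5(a), 5(b), 5(c) (strong), 5(d), 5(e). For every set A, if A ∈ ob X for all X with A ⊆ X, then Set.univ \ A has at most one element. -/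
theorem stmt15 {W : Type*} [Fintype W] (ob : Set W → Set (Set W))
    (h5a : ∀ X : Set W, ∅ ∉ ob X)
    (h5b : ∀ X Y Z : Set W, Y ∩ X = Z ∩ X → (Y ∈ ob X ↔ Z ∈ ob X))
    (h5c : ∀ X Y Z : Set W, Y ∈ ob X → Z ∈ ob X → Y ∩ Z ∈ ob X)
    (h5d : ∀ X Y Z : Set W, Y ⊆ X → X ⊆ Z → Y ∈ ob X → (Z \ X) ∪ Y ∈ ob Z)
    (h5e : ∀ X Y Z : Set W, Y ⊆ X → Z ∈ ob X → Y ∩ Z ≠ ∅ → Z ∈ ob Y) :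
    ∀ A : Set W, (∀ X : Set W, A ⊆ X → A ∈ ob X) → (Set.univ \ A).Subsingleton := by
  intro A hA a ha b hb
  by_contra hab
  have haA : a ∉ A := ha.2
  have hbA : b ∉ A := hb.2
  -- push A up to ob univ twice
  have hD : (Set.univ \ (A ∪ {a})) ∪ A ∈ ob Set.univ :=
    h5d (A ∪ {a}) A Set.univ Set.subset_union_left (Set.subset_univ _)
      (hA _ Set.subset_union_left)
  have hD' : (Set.univ \ (A ∪ {b})) ∪ A ∈ ob Set.univ :=
    h5d (A ∪ {b}) A Set.univ Set.subset_union_left (Set.subset_univ _)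
      (hA _ Set.subset_union_left)
  -- pull down to ob {a, b}
  have hDab : (Set.univ \ (A ∪ {a})) ∪ A ∈ ob ({a, b} : Set W) := by
    refine h5e Set.univ {a, b} _ (Set.subset_univ _) hD ?_
    intro h
    have : b ∈ (({a, b} : Set W) ∩ ((Set.univ \ (A ∪ {a})) ∪ A)) := by
      constructor
      · right; rfl
      · left
        refine ⟨trivial, ?_⟩
        intro hmem
        rcases hmem with h1 | h2
        · exact hbA h1
        · exact hab (Set.mem_singleton_iff.mp h2).symm
    rw [h] at this
    exact this
  have hD'ab : (Set.univ \ (A ∪ {b})) ∪ A ∈ ob ({a, b} : Set W) := by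
    refine h5e Set.univ {a, b} _ (Set.subset_univ _) hD' ?_
    intro h
    have : a ∈ (({a, b} : Set W) ∩ ((Set.univ \ (A ∪ {b})) ∪ A)) := by
      constructor
      · left; rfl
      · left
        refine ⟨trivial, ?_⟩
        intro hmem
        rcases hmem with h1 | h2
        · exact haA h1
        · exact hab (Set.mem_singleton_iff.mp h2)
    rw [h] at this
    exact this
  have hI := h5c ({a, b} : Set W) _ _ hDab hD'ab
  have hempty : (((Set.univ \ (A ∪ {a})) ∪ A) ∩ ((Set.univ \ (A ∪ {b})) ∪ A)) ∩ ({a, b} : Set W)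
      = (∅ : Set W) ∩ ({a, b} : Set W) := by
    ext x
    simp only [Set.mem_inter_iff, Set.mem_union, Set.mem_diff, Set.mem_univ, true_and,
      Set.mem_insert_iff, Set.mem_singleton_iff, Set.mem_empty_iff_false, false_and, iff_false]
    rintro ⟨⟨h1, h2⟩, h3 | h3⟩
    · subst h3
      rcases h1 with h1 | h1
      · exact h1 (Or.inr rfl)
      · exact haA h1
    · subst h3
      rcases h2 with h2 | h2
      · exact h2 (Or.inr rfl)
      · exact hbA h2
  exact h5a _ (((h5b ({a, b} : Set W) _ ∅ hempty)).mp hI)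
end

section
/- Assume ob satisfies all axioms 5(a), 5(b), 5(c) (strong), 5(d), 5(e). For all B and C, if B ⊆ C and B ∈ ob C, then C \ B has at most one element. -/
theorem stmt16 {W : Type*} [Fintype W] (ob : Set W → Set (Set W))
    (h5a : ∀ X : Set W, ∅ ∉ ob X)
    (h5b : ∀ X Y Z : Set W, Y ∩ X = Z ∩ X → (Y ∈ ob X ↔ Z ∈ ob X))
    (h5c : ∀ X Y Z : Set W, Y ∈ ob X → Z ∈ ob X → Y ∩ Z ∈ ob X)
    (h5d : ∀ X Y Z : Set W, Y ⊆ X → X ⊆ Z → Y ∈ ob X → (Z \ X) ∪ Y ∈ ob Z)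
    (h5e : ∀ X Y Z : Set W, Y ⊆ X → Z ∈ ob X → Y ∩ Z ≠ ∅ → Z ∈ ob Y) :
    ∀ B C : Set W, B ⊆ C → B ∈ ob C → (C \ B).Subsingleton := by
  intro B C hBC hB x hx y hy
  by_contra hxy
  have hBne : B ≠ ∅ := fun h => h5a C (h ▸ hB)
  have hsubx : B ∪ {x} ⊆ C := by
    intro z hz
    rcases hz with hz | hz
    · exact hBC hz
    · simp only [Set.mem_singleton_iff] at hz; exact hz ▸ hx.1
  have hsuby : B ∪ {y} ⊆ C := by
    intro z hz
    rcases hz with hz | hz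
    · exact hBC hz
    · simp only [Set.mem_singleton_iff] at hz; exact hz ▸ hy.1
  have h1 : B ∈ ob (B ∪ {x}) := by
    apply h5e C (B ∪ {x}) B hsubx hB
    rw [Set.inter_eq_right.mpr Set.subset_union_left]
    exact hBne
  have h2 : B ∈ ob (B ∪ {y}) := by
    apply h5e C (B ∪ {y}) B hsuby hB
    rw [Set.inter_eq_right.mpr Set.subset_union_left]
    exact hBne
  have hZ1 : (C \ (B ∪ {x})) ∪ B ∈ ob C :=
    h5d (B ∪ {x}) B C Set.subset_union_left hsubx h1
  have hZ2 : (C \ (B ∪ {y})) ∪ B ∈ ob C :=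
    h5d (B ∪ {y}) B C Set.subset_union_left hsuby h2
  have hpair : ({x, y} : Set W) ⊆ C := by
    intro z hz
    rcases hz with hz | hz
    · exact hz ▸ hx.1
    · exact hz ▸ hy.1
  have hZ1' : (C \ (B ∪ {x})) ∪ B ∈ ob ({x, y} : Set W) := by
    apply h5e C _ _ hpair hZ1
    intro h
    have : y ∈ (∅ : Set W) := by
      rw [← h]
      constructor
      · right; rfl
      · left; exact ⟨hy.1, by simp [hy.2, Ne.symm hxy]⟩
    exact this
  have hZ2' : (C \ (B ∪ {y})) ∪ B ∈ ob ({x, y} : Set W) := by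
    apply h5e C _ _ hpair hZ2
    intro h
    have : x ∈ (∅ : Set W) := by
      rw [← h]
      constructor
      · left; rfl
      · left; exact ⟨hx.1, by simp [hx.2, hxy]⟩
    exact this
  have hc : ((C \ (B ∪ {x})) ∪ B) ∩ ((C \ (B ∪ {y})) ∪ B) ∈ ob ({x, y} : Set W) :=
    h5c _ _ _ hZ1' hZ2'
  have hempty : (((C \ (B ∪ {x})) ∪ B) ∩ ((C \ (B ∪ {y})) ∪ B)) ∩ ({x, y} : Set W)
      = (∅ : Set W) ∩ ({x, y} : Set W) := by
    ext z
    simp only [Set.mem_inter_iff, Set.mem_union, Set.mem_diff, Set.mem_insert_iff,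
      Set.mem_singleton_iff, Set.empty_inter, Set.mem_empty_iff_false, iff_false]
    rintro ⟨⟨h1', h2'⟩, h3'⟩
    rcases h3' with rfl | rfl
    · rcases h1' with ⟨_, hn⟩ | hzB
      · exact hn (Or.inr rfl)
      · exact hx.2 hzB
    · rcases h2' with ⟨_, hn⟩ | hzB
      · exact hn (Or.inr rfl)
      · exact hy.2 hzB
  exact h5a _ ((h5b _ _ _ hempty).mp hc)
end

section
/- Uniqueness of the bad world: Assume ob satisfies all axioms 5(a), 5(b), 5(c) (strong), 5(d), 5(e). If a and b are both bad (a is bad iff ∃ X, a ∈ X ∧ X \ {a} ∈ ob X), then a = b. -/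
theorem stmt17 {W : Type*} [Fintype W] (ob : Set W → Set (Set W)) (a b : W)
    (h5a : ∀ X : Set W, ∅ ∉ ob X)
    (h5b : ∀ X Y Z : Set W, Y ∩ X = Z ∩ X → (Y ∈ ob X ↔ Z ∈ ob X))
    (h5c : ∀ X Y Z : Set W, Y ∈ ob X → Z ∈ ob X → Y ∩ Z ∈ ob X)
    (h5d : ∀ X Y Z : Set W, Y ⊆ X → X ⊆ Z → Y ∈ ob X → (Z \ X) ∪ Y ∈ ob Z)
    (h5e : ∀ X Y Z : Set W, Y ⊆ X → Z ∈ ob X → Y ∩ Z ≠ ∅ → Z ∈ ob Y)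
    (ha : ∃ X : Set W, a ∈ X ∧ X \ {a} ∈ ob X)
    (hb : ∃ X : Set W, b ∈ X ∧ X \ {b} ∈ ob X) :
    a = b := by
  by_contra hne
  obtain ⟨X, haX, hoa⟩ := ha
  obtain ⟨Y, hbY, hob⟩ := hb
  have ka : (Set.univ : Set W) \ {a} ∈ ob Set.univ := by
    have := h5d X (X \ {a}) Set.univ Set.diff_subset (Set.subset_univ _) hoa
    have heq : (Set.univ \ X) ∪ (X \ {a}) = (Set.univ : Set W) \ {a} := by
      ext x; by_cases hx : x = a <;> simp [hx, haX] <;> tauto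
    rwa [heq] at this
  have kb : (Set.univ : Set W) \ {b} ∈ ob Set.univ := by
    have := h5d Y (Y \ {b}) Set.univ Set.diff_subset (Set.subset_univ _) hob
    have heq : (Set.univ \ Y) ∪ (Y \ {b}) = (Set.univ : Set W) \ {b} := by
      ext x; by_cases hx : x = b <;> simp [hx, hbY] <;> tauto
    rwa [heq] at this
  have ra : (Set.univ : Set W) \ {a} ∈ ob {a, b} := by
    apply h5e Set.univ {a, b} _ (Set.subset_univ _) ka
    intro h
    have : b ∈ ({a, b} ∩ (Set.univ \ {a}) : Set W) := by simp [Ne.symm hne]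
    rw [h] at this; exact this
  have rb : (Set.univ : Set W) \ {b} ∈ ob {a, b} := by
    apply h5e Set.univ {a, b} _ (Set.subset_univ _) kb
    intro h
    have : a ∈ ({a, b} ∩ (Set.univ \ {b}) : Set W) := by simp [hne]
    rw [h] at this; exact this
  have := h5c {a, b} _ _ ra rb
  have hempty : ((Set.univ \ {a}) ∩ (Set.univ \ {b})) ∈ ob {a, b} ↔ (∅ : Set W) ∈ ob {a, b} := by
    apply h5b
    ext x; simp
  exact h5a _ (hempty.mp this)
end

section
/- Assume ob satisfies all axioms 5(a), 5(b), 5(c) (strong), 5(d), 5(e). If a is bad, then ob equals avoidOnly_a, where avoidOnly_a(X) = {Y | X ∩ Y ≠ ∅ ∧ X \ {a} ⊆ X ∩ Y}. -/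
def avoidOnly {W : Type*} (a : W) (X : Set W) : Set (Set W) :=
  {Y | X ∩ Y ≠ ∅ ∧ X \ {a} ⊆ X ∩ Y}

theorem stmt18 {W : Type*} [Fintype W] (ob : Set W → Set (Set W)) (a : W)
    (h5a : ∀ X : Set W, ∅ ∉ ob X)
    (h5b : ∀ X Y Z : Set W, Y ∩ X = Z ∩ X → (Y ∈ ob X ↔ Z ∈ ob X))
    (h5c : ∀ X Y Z : Set W, Y ∈ ob X → Z ∈ ob X → Y ∩ Z ∈ ob X)
    (h5d : ∀ X Y Z : Set W, Y ⊆ X → X ⊆ Z → Y ∈ ob X → (Z \ X) ∪ Y ∈ ob Z)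
    (h5e : ∀ X Y Z : Set W, Y ⊆ X → Z ∈ ob X → Y ∩ Z ≠ ∅ → Z ∈ ob Y)
    (hbad : ∃ X : Set W, a ∈ X ∧ X \ {a} ∈ ob X) :
    ob = avoidOnly a := by
  classical
  obtain ⟨X₀, haX₀, hob₀⟩ := hbad
  have hne : (X₀ \ {a} : Set W) ≠ ∅ := by
    intro h
    rw [h] at hob₀
    exact h5a _ hob₀
  -- L1 : {a}ᶜ ∈ ob univ
  have L1 : ({a}ᶜ : Set W) ∈ ob Set.univ := by
    have h := h5d X₀ (X₀ \ {a}) Set.univ Set.diff_subset (Set.subset_univ _) hob₀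
    have heq : (Set.univ \ X₀) ∪ (X₀ \ {a}) = ({a}ᶜ : Set W) := by
      ext x
      simp only [Set.mem_union, Set.mem_diff, Set.mem_univ, true_and,
        Set.mem_singleton_iff, Set.mem_compl_iff]
      constructor
      · rintro (h1 | ⟨_, h1⟩) h2
        · exact h1 (h2 ▸ haX₀)
        · exact h1 h2
      · intro h1
        by_cases hx : x ∈ X₀
        · exact Or.inr ⟨hx, h1⟩
        · exact Or.inl hx
    rwa [heq] at h
  -- L2 : restriction of {w}ᶜ
  have L2 : ∀ w : W, ({w}ᶜ : Set W) ∈ ob Set.univ → ∀ V : Set W, V \ {w} ≠ ∅ →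
      ({w}ᶜ : Set W) ∈ ob V := by
    intro w hw V hV
    refine h5e Set.univ V _ (Set.subset_univ _) hw ?_
    rwa [Set.diff_eq] at hV
  -- L3 : {x} ∈ ob {w, x}
  have L3 : ∀ w x : W, x ≠ w → ({w}ᶜ : Set W) ∈ ob Set.univ →
      ({x} : Set W) ∈ ob {w, x} := by
    intro w x hxw hw
    have h2 : ({w}ᶜ : Set W) ∈ ob {w, x} := by
      refine L2 w hw _ ?_
      intro h
      have : x ∈ ({w, x} : Set W) \ {w} := ⟨Or.inr rfl, hxw⟩
      rw [h] at this
      exact this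
    refine (h5b ({w, x} : Set W) ({x} : Set W) ({w}ᶜ : Set W) ?_).mpr h2
    ext y
    simp only [Set.mem_inter_iff, Set.mem_singleton_iff, Set.mem_compl_iff,
      Set.mem_insert_iff]
    constructor
    · rintro ⟨rfl, _⟩
      exact ⟨hxw, Or.inr rfl⟩
    · rintro ⟨h1, h2 | h2⟩
      · exact absurd h2 h1
      · exact ⟨h2, Or.inr h2⟩
  -- two distinct bad worlds give a contradiction
  have Lcontra : ∀ w₁ w₂ : W, w₁ ≠ w₂ → ({w₁}ᶜ : Set W) ∈ ob Set.univ →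
      ({w₂}ᶜ : Set W) ∈ ob Set.univ → False := by
    intro w₁ w₂ hne12 h1 h2
    have ha1 : ({w₂} : Set W) ∈ ob {w₁, w₂} := L3 w₁ w₂ hne12.symm h1
    have ha2 : ({w₁} : Set W) ∈ ob {w₂, w₁} := L3 w₂ w₁ hne12 h2
    rw [Set.pair_comm w₂ w₁] at ha2
    have := h5c _ _ _ ha1 ha2
    have heq : ({w₂} : Set W) ∩ {w₁} = ∅ := by
      ext y
      simp only [Set.mem_inter_iff, Set.mem_singleton_iff, Set.mem_empty_iff_false,
        iff_false, not_and]
      rintro rfl rfl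
      exact hne12 rfl
    rw [heq] at this
    exact h5a _ this
  -- L4 : univ ∈ ob univ
  have hacne : ({a}ᶜ : Set W) ≠ ∅ := by
    obtain ⟨x, hx⟩ := Set.nonempty_iff_ne_empty.mpr hne
    intro h
    have : x ∈ ({a}ᶜ : Set W) := hx.2
    rw [h] at this
    exact this
  have L4 : (Set.univ : Set W) ∈ ob Set.univ := by
    have hdiff : ({a}ᶜ : Set W) \ {a} = {a}ᶜ := by
      ext x; simp [Set.mem_diff]
    have h := L2 a L1 ({a}ᶜ : Set W) (by rw [hdiff]; exact hacne)
    have h2 := h5d ({a}ᶜ : Set W) ({a}ᶜ : Set W) Set.univ subset_rfl (Set.subset_univ _) h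
    have heq : (Set.univ \ ({a}ᶜ : Set W)) ∪ {a}ᶜ = Set.univ := by
      ext x
      simp only [Set.mem_union, Set.mem_diff, Set.mem_univ, true_and,
        Set.mem_compl_iff, Set.mem_singleton_iff, iff_true]
      tauto
    rwa [heq] at h2
  -- L5 : supersets of nonempty X are in ob X
  have L5 : ∀ X Y : Set W, X ≠ ∅ → X ⊆ Y → Y ∈ ob X := by
    intro X Y hXne hXY
    have hu : (Set.univ : Set W) ∈ ob X := by
      refine h5e Set.univ X Set.univ (Set.subset_univ _) L4 ?_
      rwa [Set.inter_univ]
    refine (h5b X Y Set.univ ?_).mpr hu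
    rw [Set.inter_eq_self_of_subset_right hXY, Set.univ_inter]
  -- L6 : badness propagation
  have L6 : ∀ (N : Set W) (b : W), N ∈ ob Set.univ → b ∉ N → b ≠ a →
      ({b}ᶜ : Set W) ∈ ob Set.univ := by
    intro N b hN hbN hba
    have hN' : N ∩ {a}ᶜ ∈ ob Set.univ := h5c _ _ _ hN L1
    have hN'ne : N ∩ ({a}ᶜ : Set W) ≠ ∅ := by
      intro h
      rw [h] at hN'
      exact h5a _ hN'
    obtain ⟨c, hcN, hca⟩ := Set.nonempty_iff_ne_empty.mpr hN'ne
    have hcb : c ≠ b := fun h => hbN (h ▸ hcN)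
    have h1 : N ∩ {a}ᶜ ∈ ob ({b, c} : Set W) := by
      refine h5e Set.univ ({b, c} : Set W) _ (Set.subset_univ _) hN' ?_
      intro h
      have : c ∈ ({b, c} : Set W) ∩ (N ∩ {a}ᶜ) := ⟨Or.inr rfl, hcN, hca⟩
      rw [h] at this
      exact this
    have h2 : ({c} : Set W) ∈ ob ({b, c} : Set W) := by
      refine (h5b _ _ _ ?_).mpr h1
      ext y
      simp only [Set.mem_inter_iff, Set.mem_singleton_iff, Set.mem_insert_iff,
        Set.mem_compl_iff]
      constructor
      · rintro ⟨rfl, _⟩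
        exact ⟨⟨hcN, hca⟩, Or.inr rfl⟩
      · rintro ⟨⟨hy1, hy2⟩, hy3 | hy3⟩
        · exact absurd hy3 (fun h => hbN (h ▸ hy1))
        · exact ⟨hy3, Or.inr hy3⟩
    have h3 := h5d ({b, c} : Set W) ({c} : Set W) Set.univ
      (by intro y hy; exact Or.inr hy) (Set.subset_univ _) h2
    have heq : (Set.univ \ ({b, c} : Set W)) ∪ {c} = ({b}ᶜ : Set W) := by
      ext x
      simp only [Set.mem_union, Set.mem_diff, Set.mem_univ, true_and,
        Set.mem_insert_iff, Set.mem_singleton_iff, Set.mem_compl_iff]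
      constructor
      · rintro (h | rfl)
        · exact fun hx => h (Or.inl hx)
        · exact hcb
      · intro h
        by_cases hx : x = c
        · exact Or.inr hx
        · exact Or.inl (fun hh => by rcases hh with hh | hh <;> [exact h hh; exact hx hh])
    rwa [heq] at h3
  -- main proof
  funext X
  ext Y
  constructor
  · intro hY
    have hXYne : X ∩ Y ≠ ∅ := by
      intro h
      apply h5a X
      refine (h5b X ∅ Y ?_).mpr hY
      rw [Set.empty_inter, Set.inter_comm Y X, h]
    refine ⟨hXYne, ?_⟩
    rintro b ⟨hbX, hba⟩
    refine ⟨hbX, ?_⟩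
    by_contra hbY
    have hYX : Y ∩ X ∈ ob X := by
      refine (h5b X (Y ∩ X) Y ?_).mpr hY
      rw [Set.inter_assoc, Set.inter_self]
    have hM := h5d X (Y ∩ X) Set.univ Set.inter_subset_right (Set.subset_univ _) hYX
    have hbM : b ∉ (Set.univ \ X) ∪ (Y ∩ X) := by
      rintro (h | h)
      · exact h.2 hbX
      · exact hbY h.1
    have hbbad := L6 _ b hM hbM hba
    exact Lcontra b a hba hbbad L1
  · rintro ⟨hXYne, hsub⟩
    by_cases hcase : a ∈ X ∧ a ∉ Y
    · obtain ⟨haX, haY⟩ := hcase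
      have hXane : (X \ {a} : Set W) ≠ ∅ := by
        obtain ⟨x, hx1, hx2⟩ := Set.nonempty_iff_ne_empty.mpr hXYne
        intro h
        have : x ∈ X \ {a} := ⟨hx1, fun hh => haY (hh ▸ hx2)⟩
        rw [h] at this
        exact this
      have hc : ({a}ᶜ : Set W) ∈ ob X := L2 a L1 X hXane
      refine (h5b X Y ({a}ᶜ : Set W) ?_).mpr hc
      ext x
      simp only [Set.mem_inter_iff, Set.mem_compl_iff, Set.mem_singleton_iff]
      constructor
      · rintro ⟨hxY, hxX⟩
        exact ⟨fun h => haY (h ▸ hxY), hxX⟩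
      · rintro ⟨hxa, hxX⟩
        exact ⟨(hsub ⟨hxX, hxa⟩).2, hxX⟩
    · have hXY : X ⊆ Y := by
        intro x hx
        by_cases hxa : x = a
        · subst hxa
          by_contra h
          exact hcase ⟨hx, h⟩
        · exact (hsub ⟨hx, hxa⟩).2
      have hXne : X ≠ ∅ := by
        intro h
        rw [h, Set.empty_inter] at hXYne
        exact hXYne rfl
      exact L5 X Y hXne hXY
end

section
/- Quasibad implies bad: Assume ob satisfies axioms 5(a), 5(b), 5(e). If a world a is quasibad (∃ X Y, a ∈ X \ Y ∧ Y ∈ ob X), then a is bad (∃ X, a ∈ X ∧ X \ {a} ∈ ob X). -/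
theorem stmt19 {W : Type*} [Fintype W] (ob : Set W → Set (Set W)) (a : W)
    (h5a : ∀ X : Set W, ∅ ∉ ob X)
    (h5b : ∀ X Y Z : Set W, Y ∩ X = Z ∩ X → (Y ∈ ob X ↔ Z ∈ ob X))
    (h5e : ∀ X Y Z : Set W, Y ⊆ X → Z ∈ ob X → Y ∩ Z ≠ ∅ → Z ∈ ob Y)
    (hqb : ∃ X Y : Set W, a ∈ X \ Y ∧ Y ∈ ob X) :
    ∃ X : Set W, a ∈ X ∧ X \ {a} ∈ ob X := by
  obtain ⟨X, Y, ⟨haX, haY⟩, hY⟩ := hqb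
  set X' : Set W := (Y ∩ X) ∪ {a} with hX'
  have hsub : X' ⊆ X := by
    rintro x (⟨hx, hx'⟩ | hx)
    · exact hx'
    · simp_all
  have hne : Y ∩ X ≠ ∅ := by
    intro h
    exact h5a X ((h5b X ∅ Y (by simp [h]) ).mpr hY)
  have hYX' : Y ∈ ob X' := by
    apply h5e X X' Y hsub hY
    intro h
    apply hne
    ext x
    simp only [Set.mem_inter_iff, Set.mem_empty_iff_false, iff_false]
    rintro ⟨hxY, hxX⟩
    have : x ∈ X' ∩ Y := ⟨Or.inl ⟨hxY, hxX⟩, hxY⟩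
    simp [h] at this
  refine ⟨X', Or.inr rfl, ?_⟩
  refine (h5b X' Y (X' \ {a}) ?_).mp hYX'
  ext x
  simp only [Set.mem_inter_iff, Set.mem_diff, Set.mem_singleton_iff]
  constructor
  · rintro ⟨hxY, hxX'⟩
    exact ⟨⟨hxX', fun h => haY (h ▸ hxY)⟩, hxX'⟩
  · rintro ⟨⟨hxX', hxa⟩, _⟩
    rcases hxX' with ⟨h1, _⟩ | h
    · exact ⟨h1, Or.inl ⟨h1, ‹_›⟩⟩
    · exact absurd h hxa
end
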